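/- Let n = 2, m = 1, F((x₁,x₂)ᵀ) ≡ (1,0)ᵀ, B = (0,1)ᵀ, and let C be the annulus {(x₁,x₂)ᵀ : 4 ≤ x₁² + x₂² ≤ 16}. Let y⁰ = (−1,3)ᵀ and y¹ = (1,−3)ᵀ. Then T_C(y⁰,y¹) = ∞, i.e. y¹ is not reachable from y⁰ under the state constraint C. -/

import Mathlib

noncomputable section
open MeasureTheory Set RealInnerProductSpace
open scoped ENNReal

/-- Euclidean state space `ℝ^n`. -/
abbrev Euc (n : ℕ) := EuclideanSpace ℝ (Fin n)

/-- Orthogonal projection onto a subspace, viewed as a map into the ambient space. -/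
noncomputable def projS {n : ℕ} (G : Submodule ℝ (Euc n)) (x : Euc n) : Euc n :=
  (G.orthogonalProjection x : Euc n)

/-- The set of admissible controllability times `T` for the system `ẏ = F(y) + B u`
with state constraint `y(t) ∈ C`, steering `y0` to `y1`.  The control `u` is a
measurable essentially bounded function; the absolutely continuous trajectory `y`
is encoded via the integral equation. -/
def ctrlTimes {n m : ℕ} (F : Euc n → Euc n) (B : Euc m →ₗ[ℝ] Euc n)
    (C : Set (Euc n)) (y0 y1 : Euc n) : Set ℝ :=
  {T | 0 < T ∧ ∃ u : ℝ → Euc m, ∃ y : ℝ → Euc n,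
    Measurable u ∧ (∃ M : ℝ, ∀ t ∈ Icc (0:ℝ) T, ‖u t‖ ≤ M) ∧
    ContinuousOn y (Icc 0 T) ∧
    IntervalIntegrable (fun s => F (y s) + B (u s)) volume 0 T ∧
    (∀ t ∈ Icc (0:ℝ) T, y t = y0 + ∫ s in (0:ℝ)..t, (F (y s) + B (u s))) ∧
    (∀ t ∈ Icc (0:ℝ) T, y t ∈ C) ∧ y 0 = y0 ∧ y T = y1}

/-- The minimal controllability time `T_C(y0, y1)` (with the convention `inf ∅ = ∞`). -/
noncomputable def minTime {n m : ℕ} (F : Euc n → Euc n) (B : Euc m →ₗ[ℝ] Euc n)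
    (C : Set (Euc n)) (y0 y1 : Euc n) : ℝ≥0∞ :=
  sInf (ENNReal.ofReal '' ctrlTimes F B C y0 y1)

/-- The vector `(a, b)ᵀ ∈ ℝ²`. -/
noncomputable def v2 (a b : ℝ) : Euc 2 := (WithLp.equiv 2 _).symm ![a, b]

/-- The control map `B : ℝ → ℝ²`, `u ↦ (0, u)ᵀ`. -/
noncomputable def Bcol2 : Euc 1 →ₗ[ℝ] Euc 2 :=
  Matrix.toEuclideanLin (!![0; 1] : Matrix (Fin 2) (Fin 1) ℝ)

/-- The annulus `C = {(x₁,x₂) : 4 ≤ x₁² + x₂² ≤ 16}`. -/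
def annulus : Set (Euc 2) :=
  {x : Euc 2 | 4 ≤ (x 0)^2 + (x 1)^2 ∧ (x 0)^2 + (x 1)^2 ≤ 16}

lemma v2_apply0 (a b : ℝ) : (v2 a b) 0 = a := by simp [v2]
lemma v2_apply1 (a b : ℝ) : (v2 a b) 1 = b := by simp [v2]
lemma Bcol2_apply0 (u : Euc 1) : (Bcol2 u) 0 = 0 := by
  simp [Bcol2, Matrix.toEuclideanLin_apply, Matrix.mulVec, dotProduct]

/-- Example 2 of the paper.  For the system `ẏ = (1,0)ᵀ + (0,1)ᵀ u`
on the annulus `C = {4 ≤ x₁² + x₂² ≤ 16}`, the point `y¹ = (1,-3)ᵀ` is not reachable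
from `y⁰ = (-1,3)ᵀ` under the state constraint `C`: `T_C(y⁰, y¹) = ∞`. -/
theorem example_annulus_not_reachable :
    minTime (fun _ : Euc 2 => v2 1 0) Bcol2 annulus (v2 (-1) 3) (v2 1 (-3)) = ⊤ := by
  have hempty : ctrlTimes (fun _ : Euc 2 => v2 1 0) Bcol2 annulus (v2 (-1) 3) (v2 1 (-3)) = ∅ := by
    rw [Set.eq_empty_iff_forall_notMem]
    rintro T ⟨hT, u, y, -, -, hycont, hInt, hIE, hC, hy0, hyT⟩
    set e0 : Euc 2 →L[ℝ] ℝ := EuclideanSpace.proj (0 : Fin 2)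
    -- first coordinate formula
    have hcoord : ∀ t ∈ Icc (0:ℝ) T, (y t) 0 = -1 + t := by
      intro t ht
      have hint_t : IntervalIntegrable (fun s => v2 1 0 + Bcol2 (u s)) volume 0 t := by
        apply hInt.mono_set
        rw [Set.uIcc_of_le ht.1, Set.uIcc_of_le (le_of_lt hT)]
        exact Set.Icc_subset_Icc le_rfl ht.2
      have := hIE t ht
      have h0 : (y t) 0 = (v2 (-1) 3) 0 + e0 (∫ s in (0:ℝ)..t, (v2 1 0 + Bcol2 (u s))) := by
        rw [this]; rfl
      rw [h0, ← e0.intervalIntegral_comp_comm hint_t]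
      have : (fun s => e0 (v2 1 0 + Bcol2 (u s))) = fun _ => (1:ℝ) := by
        funext s
        have : e0 (v2 1 0 + Bcol2 (u s)) = (v2 1 0) 0 + (Bcol2 (u s)) 0 := rfl
        rw [this, v2_apply0, Bcol2_apply0, add_zero]
      rw [this, v2_apply0, intervalIntegral.integral_const, smul_eq_mul, sub_zero, mul_one]
    -- T = 2
    have hT2 : T = 2 := by
      have := hcoord T ⟨le_of_lt hT, le_rfl⟩
      rw [hyT, v2_apply0] at this
      linarith
    subst hT2
    -- IVT for second coordinate
    have hgc : ContinuousOn (fun t => (y t) 1) (Icc (0:ℝ) 2) :=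
      (EuclideanSpace.proj (1 : Fin 2)).continuous.comp_continuousOn hycont
    have h3 : (0:ℝ) ∈ Icc ((y 2) 1) ((y 0) 1) := by
      rw [hy0, hyT, v2_apply1, v2_apply1]
      constructor <;> norm_num
    obtain ⟨t, ht, hgt⟩ := intermediate_value_Icc' (by norm_num : (0:ℝ) ≤ 2) hgc h3
    have hmem := hC t ht
    have h1 := hcoord t ht
    have : 4 ≤ ((y t) 0)^2 + ((y t) 1)^2 := hmem.1
    simp only at hgt; rw [hgt, h1] at this
    nlinarith [ht.1, ht.2]
  rw [minTime, hempty]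
  simp
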